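/- Let n = p₁^{r₁}···p_m^{r_m} with distinct primes p_i and r_i ≥ 1. The clique number of the reduced graph of the power graph of the cyclic group Z_n equals 1 if m = 1, and equals r₁ + r₂ + ··· + r_m if m ≥ 2. -/

import Mathlib

/-- Closed neighborhood of a vertex. -/
def SimpleGraph.closedNbhd {V : Type*} (Γ : SimpleGraph V) (x : V) : Set V :=
  insert x (Γ.neighborSet x)

/-- `z` strongly resolves `x` and `y`: some shortest path from `z` to `x` contains `y`,
or some shortest path from `z` to `y` contains `x`. -/
def SimpleGraph.StronglyResolves {V : Type*} (Γ : SimpleGraph V) (z x y : V) : Prop :=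
  Γ.dist z y + Γ.dist y x = Γ.dist z x ∨ Γ.dist z x + Γ.dist x y = Γ.dist z y

def SimpleGraph.IsStrongResolvingSet {V : Type*} (Γ : SimpleGraph V) (S : Set V) : Prop :=
  ∀ x y : V, x ≠ y → ∃ z ∈ S, Γ.StronglyResolves z x y

/-- Strong metric dimension. -/
noncomputable def SimpleGraph.sdim {V : Type*} (Γ : SimpleGraph V) : ℕ :=
  sInf {k | ∃ S : Set V, Γ.IsStrongResolvingSet S ∧ S.ncard = k}

/-- Equivalence: equal closed neighborhoods. -/
def SimpleGraph.nbhdSetoid {V : Type*} (Γ : SimpleGraph V) : Setoid V :=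
  ⟨fun x y => Γ.closedNbhd x = Γ.closedNbhd y,
   ⟨fun _ => rfl, Eq.symm, Eq.trans⟩⟩

/-- The reduced graph of `Γ`. -/
def SimpleGraph.reduced {V : Type*} (Γ : SimpleGraph V) :
    SimpleGraph (Quotient Γ.nbhdSetoid) where
  Adj a b := a ≠ b ∧ ∃ x y : V,
    Quotient.mk Γ.nbhdSetoid x = a ∧ Quotient.mk Γ.nbhdSetoid y = b ∧ Γ.Adj x y
  symm := by
    refine ⟨?_⟩
    rintro a b ⟨h, x, y, hx, hy, hxy⟩
    exact ⟨h.symm, y, x, hy, hx, hxy.symm⟩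
  loopless := by refine ⟨?_⟩; rintro a ⟨h, -⟩; exact h rfl

/-- The power graph of a group. -/
def powerGraph (G : Type*) [Group G] : SimpleGraph G where
  Adj x y := x ≠ y ∧ (x ∈ Subgroup.zpowers y ∨ y ∈ Subgroup.zpowers x)
  symm := by refine ⟨?_⟩; rintro x y ⟨h, h2⟩; exact ⟨h.symm, h2.symm⟩
  loopless := by refine ⟨?_⟩; rintro x ⟨h, -⟩; exact h rfl

/-- `σ n`: 1 if `n` is a prime power, otherwise the sum of the exponents in the
prime factorization of `n`. -/
noncomputable def sigmaExp (n : ℕ) : ℕ :=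
  if IsPrimePow n then 1 else n.factorization.sum fun _ k => k

/-- A maximal cyclic subgroup. -/
def IsMaxCyclic {G : Type*} [Group G] (M : Subgroup G) : Prop :=
  IsCyclic M ∧ ∀ N : Subgroup G, IsCyclic N → M ≤ N → M = N

/-- The set `𝓜_p` of maximal cyclic subgroups that are `p`-groups. -/
def maxCycP (p : ℕ) (G : Type*) [Group G] : Set (Subgroup G) :=
  {M | IsMaxCyclic M ∧ IsPGroup p M}

/-- The set of intersections of `M` with members of `𝓜_p`. -/
def inters (p : ℕ) {G : Type*} [Group G] (M : Subgroup G) : Set (Subgroup G) :=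
  {C | ∃ N ∈ maxCycP p G, C = M ⊓ N}

/-- `s_i`: the number of distinct intersections. -/
noncomputable def sNum (p : ℕ) {G : Type*} [Group G] (M : Subgroup G) : ℕ :=
  Nat.card (inters p M)

open Classical in
/-- `λ_i`, defined by `p ^ λ_i = max {|M ⊓ N| : N maximal cyclic, not a p-group}`
if maximal cyclic non-`p`-subgroups exist, and `λ_i = -1` otherwise. -/
noncomputable def lamInt (p : ℕ) {G : Type*} [Group G] (M : Subgroup G) : ℤ :=
  if {N : Subgroup G | IsMaxCyclic N ∧ ¬ IsPGroup p N}.Nonempty then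
    (padicValNat p (sSup {k | ∃ N : Subgroup G, IsMaxCyclic N ∧ ¬ IsPGroup p N ∧
        k = Nat.card ↥(M ⊓ N)}) : ℤ)
  else -1

/-- `s_i'`: the least index `u` with `p ^ λ_i < |C_{iu}|` in the chain of intersections;
equivalently one more than the number of intersections of cardinality at most `p ^ λ_i`. -/
noncomputable def sPrimeNum (p : ℕ) {G : Type*} [Group G] (M : Subgroup G) : ℕ :=
  Nat.card {C | C ∈ inters p M ∧ (Nat.card ↥C : ℚ) ≤ (p : ℚ) ^ (lamInt p M)} + 1

noncomputable def alphaTerm (p : ℕ) {G : Type*} [Group G] (M : Subgroup G) : ℤ :=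
  (sNum p M : ℤ) - (sPrimeNum p M : ℤ) + lamInt p M + 2

/-- `α_p = max_i (s_i - s_i' + λ_i + 2)`, with `α_p = 0` when `𝓜_p = ∅`. -/
noncomputable def alphaP (p : ℕ) (G : Type*) [Group G] : ℤ :=
  sSup (alphaTerm p '' maxCycP p G)

/-- A CP-group: every nonidentity element has prime power order. -/
def IsCPGroup (G : Type*) [Group G] : Prop :=
  ∀ g : G, g ≠ 1 → IsPrimePow (orderOf g)




/-- Number of prime factors with multiplicity. -/
def bigOmega (d : ℕ) : ℕ := d.factorization.sum fun _ k => k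

lemma bigOmega_mul {a b : ℕ} (ha : a ≠ 0) (hb : b ≠ 0) :
    bigOmega (a * b) = bigOmega a + bigOmega b := by
  unfold bigOmega
  rw [Nat.factorization_mul ha hb]
  exact Finsupp.sum_add_index' (fun _ => rfl) (fun _ _ _ => rfl)

lemma bigOmega_pow {q k : ℕ} (hq : q.Prime) : bigOmega (q ^ k) = k := by
  unfold bigOmega
  rw [hq.factorization_pow]
  simp

lemma bigOmega_one : bigOmega 1 = 0 := by simp [bigOmega]

lemma one_le_bigOmega {k : ℕ} (hk : 2 ≤ k) : 1 ≤ bigOmega k := by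
  obtain ⟨q, hq, hqd⟩ := Nat.exists_prime_and_dvd (by omega : k ≠ 1)
  have hk0 : k ≠ 0 := by omega
  have hmem : q ∈ k.factorization.support := by
    rw [Nat.support_factorization, Nat.mem_primeFactors]
    exact ⟨hq, hqd, hk0⟩
  calc 1 ≤ k.factorization q := hq.factorization_pos_of_dvd hk0 hqd
    _ ≤ bigOmega k := Finset.single_le_sum (fun _ _ => Nat.zero_le _) hmem

lemma bigOmega_lt_of_dvd {a b : ℕ} (hab : a ∣ b) (hne : a ≠ b) (hb : b ≠ 0) :
    bigOmega a < bigOmega b := by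
  obtain ⟨k, rfl⟩ := hab
  have ha : a ≠ 0 := by rintro rfl; simp at hb
  have hk : 2 ≤ k := by
    rcases Nat.lt_or_ge k 2 with h | h
    · interval_cases k <;> simp_all
    · exact h
  rw [bigOmega_mul ha (by omega)]
  have := one_le_bigOmega hk
  omega

lemma bigOmega_le_of_dvd {a b : ℕ} (hab : a ∣ b) (hb : b ≠ 0) :
    bigOmega a ≤ bigOmega b := by
  rcases eq_or_ne a b with rfl | h
  · exact le_rfl
  · exact (bigOmega_lt_of_dvd hab h hb).le

section Sep
variable {n a b : ℕ}

lemma exists_lt_factorization (hn : n ≠ 0) (ha : a ≠ 0) (hnd : ¬ n ∣ a) :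
    ∃ q : ℕ, q.Prime ∧ a.factorization q < n.factorization q := by
  have : ¬ n.factorization ≤ a.factorization := by
    intro h
    exact hnd ((Nat.factorization_le_iff_dvd hn ha).1 h)
  rw [Finsupp.le_def] at this
  push_neg at this
  obtain ⟨q, hq⟩ := this
  refine ⟨q, ?_, hq⟩
  have : q ∈ n.factorization.support := by
    rw [Finsupp.mem_support_iff]; omega
  rw [Nat.support_factorization] at this
  exact Nat.prime_of_mem_primeFactors this

lemma core (hn : n ≠ 0)
    (two : ∃ q s : ℕ, q.Prime ∧ s.Prime ∧ q ≠ s ∧ q ∣ n ∧ s ∣ n)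
    (hab : a ∣ b) (hne : a ≠ b) (hbn : b ∣ n) (ha1 : a ≠ 1) :
    ∃ c, c ∣ n ∧ ¬ ((a ∣ c ∨ c ∣ a) ↔ (b ∣ c ∨ c ∣ b)) := by
  have hb0 : b ≠ 0 := fun h => hn (by simpa [h] using hbn)
  have ha0 : a ≠ 0 := fun h => hb0 (by simpa [h] using hab)
  have han : a ∣ n := hab.trans hbn
  obtain ⟨q, hq, hqlt⟩ := exists_lt_factorization hb0 ha0
    (fun h => hne (Nat.dvd_antisymm hab h))
  have haq_le : a.factorization q ≤ n.factorization q :=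
    (Nat.factorization_le_iff_dvd ha0 hn).2 han q
  set c1 : ℕ := (n / q ^ n.factorization q) * q ^ (a.factorization q) with hc1def
  have hoc0 : (n / q ^ n.factorization q) ≠ 0 := (Nat.ordCompl_pos q hn).ne'
  have hc10 : c1 ≠ 0 := mul_ne_zero hoc0 (pow_ne_zero _ hq.pos.ne')
  have hc1fact : ∀ s, c1.factorization s =
      if s = q then a.factorization q else n.factorization s := by
    intro s
    rw [hc1def, Nat.factorization_mul hoc0 (pow_ne_zero _ hq.pos.ne'),
      Nat.factorization_ordCompl, hq.factorization_pow]
    rcases eq_or_ne s q with rfl | h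
    · simp
    · simp [Finsupp.erase_ne h, Finsupp.single_eq_of_ne (Ne.symm h), h]
  have hc1n : c1 ∣ n := by
    rw [← Nat.factorization_le_iff_dvd hc10 hn]
    intro s
    rw [hc1fact s]
    split <;> simp_all
  have hac1 : a ∣ c1 := by
    rw [← Nat.factorization_le_iff_dvd ha0 hc10]
    intro s
    rw [hc1fact s]
    split
    · subst ‹s = q›; exact le_rfl
    · exact (Nat.factorization_le_iff_dvd ha0 hn).2 han s
  have hbc1 : ¬ b ∣ c1 := by
    intro h
    have := (Nat.factorization_le_iff_dvd hb0 hc10).2 h q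
    rw [hc1fact q] at this
    simp at this
    omega
  by_cases hcb : c1 ∣ b
  · have hnb : ∀ s, s ≠ q → n.factorization s ≤ b.factorization s := by
      intro s hs
      have := (Nat.factorization_le_iff_dvd hc10 hb0).2 hcb s
      rwa [hc1fact s, if_neg hs] at this
    by_cases hall : ∀ u : ℕ, u.Prime → u ∣ a → u = q
    · -- a is a power of q; pick s ≠ q prime dividing n
      obtain ⟨q1, q2, h1, h2, h12, hd1, hd2⟩ := two
      obtain ⟨s, hs, hsq, hsd⟩ : ∃ s : ℕ, s.Prime ∧ s ≠ q ∧ s ∣ n := by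
        rcases eq_or_ne q1 q with rfl | h
        · exact ⟨q2, h2, fun h => h12 h.symm, hd2⟩
        · exact ⟨q1, h1, h, hd1⟩
      have hqa : q ∣ a := by
        obtain ⟨u, hu, hua⟩ := Nat.exists_prime_and_dvd ha1
        exact (hall u hu hua) ▸ hua
      refine ⟨s ^ (n.factorization s), (Nat.ordProj_dvd n s), fun hiff => ?_⟩
      have hright : b ∣ s ^ n.factorization s ∨ s ^ n.factorization s ∣ b := by
        right
        rw [Nat.Prime.pow_dvd_iff_le_factorization hs hb0]
        exact hnb s hsq
      rcases hiff.2 hright with h | h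
      · have : q ∣ s ^ n.factorization s := hqa.trans h
        exact hsq (((Nat.prime_dvd_prime_iff_eq hq hs).1 (hq.dvd_of_dvd_pow this)).symm)
      · have hs1 : s ∣ s ^ n.factorization s :=
          dvd_pow_self s (hs.factorization_pos_of_dvd hn hsd).ne'
        have : s ∣ a := hs1.trans h
        exact hsq (hall s hs this)
    · push_neg at hall
      obtain ⟨u, hu, hua, huq⟩ := hall
      refine ⟨q ^ (b.factorization q), (Nat.ordProj_dvd b q).trans hbn, fun hiff => ?_⟩
      rcases hiff.2 (Or.inr (Nat.ordProj_dvd b q)) with h | h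
      · exact huq ((Nat.prime_dvd_prime_iff_eq hu hq).1
          (hu.dvd_of_dvd_pow (hua.trans h)))
      · rw [Nat.Prime.pow_dvd_iff_le_factorization hq ha0] at h
        omega
  · refine ⟨c1, hc1n, fun hiff => ?_⟩
    rcases hiff.1 (Or.inl hac1) with h | h
    · exact hbc1 h
    · exact hcb h

lemma lemD (hn : n ≠ 0)
    (two : ∃ q s : ℕ, q.Prime ∧ s.Prime ∧ q ≠ s ∧ q ∣ n ∧ s ∣ n)
    (han : a ∣ n) (ha1 : a ≠ 1) (hann : a ≠ n) :
    ∃ c, c ∣ n ∧ ¬ a ∣ c ∧ ¬ c ∣ a := by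
  have ha0 : a ≠ 0 := fun h => hn (by simpa [h] using han)
  obtain ⟨q, hq, hqlt⟩ := exists_lt_factorization hn ha0
    (fun h => hann (Nat.dvd_antisymm han h))
  by_cases hall : ∀ u : ℕ, u.Prime → u ∣ a → u = q
  · obtain ⟨q1, q2, h1, h2, h12, hd1, hd2⟩ := two
    obtain ⟨s, hs, hsq, hsd⟩ : ∃ s : ℕ, s.Prime ∧ s ≠ q ∧ s ∣ n := by
      rcases eq_or_ne q1 q with rfl | h
      · exact ⟨q2, h2, fun h => h12 h.symm, hd2⟩
      · exact ⟨q1, h1, h, hd1⟩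
    refine ⟨s, hsd, ?_, ?_⟩
    · intro hasc
      have has : a = s := ((Nat.Prime.eq_one_or_self_of_dvd hs a hasc).resolve_left ha1)
      obtain ⟨u, hu, hua⟩ := Nat.exists_prime_and_dvd ha1
      have : u = q := hall u hu hua
      subst this
      rw [has] at hua
      exact hsq ((Nat.prime_dvd_prime_iff_eq hu hs).1 hua).symm
    · intro hsa
      exact hsq (hall s hs hsa)
  · push_neg at hall
    obtain ⟨u, hu, hua, huq⟩ := hall
    refine ⟨q ^ (a.factorization q + 1), ?_, ?_, ?_⟩
    · rw [Nat.Prime.pow_dvd_iff_le_factorization hq hn]; omega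
    · intro hac
      have : u ∣ q ^ (a.factorization q + 1) := hua.trans hac
      exact huq ((Nat.prime_dvd_prime_iff_eq hu hq).1 (hu.dvd_of_dvd_pow this))
    · intro hca
      rw [Nat.Prime.pow_dvd_iff_le_factorization hq ha0] at hca
      omega

lemma sep (hn : n ≠ 0)
    (two : ∃ q s : ℕ, q.Prime ∧ s.Prime ∧ q ≠ s ∧ q ∣ n ∧ s ∣ n)
    (ha : a ∣ n) (hb : b ∣ n)
    (h : ∀ c, c ∣ n → ((a ∣ c ∨ c ∣ a) ↔ (b ∣ c ∨ c ∣ b))) :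
    a = b ∨ ((a = 1 ∨ a = n) ∧ (b = 1 ∨ b = n)) := by
  by_cases hA : a = 1 ∨ a = n
  · by_cases hB : b = 1 ∨ b = n
    · exact Or.inr ⟨hA, hB⟩
    · push_neg at hB
      obtain ⟨c, hcn, hc1, hc2⟩ := lemD hn two hb hB.1 hB.2
      have := (h c hcn).1 ?_
      · exact absurd this (by tauto)
      · rcases hA with rfl | rfl
        · exact Or.inl (one_dvd c)
        · exact Or.inr hcn
  · push_neg at hA
    by_cases hB : b = 1 ∨ b = n
    · obtain ⟨c, hcn, hc1, hc2⟩ := lemD hn two ha hA.1 hA.2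
      have := (h c hcn).2 ?_
      · exact absurd this (by tauto)
      · rcases hB with rfl | rfl
        · exact Or.inl (one_dvd c)
        · exact Or.inr hcn
    · push_neg at hB
      have hcomp : b ∣ a ∨ a ∣ b := (h a ha).1 (Or.inl dvd_rfl)
      rcases eq_or_ne a b with heq | hne
      · exact Or.inl heq
      rcases hcomp with hba | hab
      · obtain ⟨c, hcn, hbad⟩ := core hn two hba (Ne.symm hne) ha hB.1
        exact absurd (fun hh => ((h c hcn).symm)) (by intro hh; exact hbad (hh trivial))
      · obtain ⟨c, hcn, hbad⟩ := core hn two hab hne hb hA.1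
        exact absurd (h c hcn) hbad
end Sep

lemma chain_card_le {n : ℕ} (hn0 : n ≠ 0) (hn2 : 2 ≤ n) (S : Finset ℕ)
    (hdvd : ∀ a ∈ S, a ∣ n)
    (hchain : ∀ a ∈ S, ∀ b ∈ S, a ∣ b ∨ b ∣ a)
    (hnot : ¬ (1 ∈ S ∧ n ∈ S)) : S.card ≤ bigOmega n := by
  rcases S.eq_empty_or_nonempty with rfl | hS
  · simp
  have h0 : ∀ a ∈ S, a ≠ 0 := by
    intro a ha h
    subst h
    exact hn0 (Nat.eq_zero_of_zero_dvd (hdvd 0 ha))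
  set mn := S.min' hS with hmn
  set mx := S.max' hS with hmx
  have hmnS : mn ∈ S := S.min'_mem hS
  have hmxS : mx ∈ S := S.max'_mem hS
  have hmndvd : ∀ a ∈ S, mn ∣ a := by
    intro a ha
    rcases hchain mn hmnS a ha with h | h
    · exact h
    · have : a = mn := Nat.le_antisymm
        (Nat.le_of_dvd (Nat.pos_of_ne_zero (h0 mn hmnS)) h) (S.min'_le a ha)
      exact this ▸ dvd_rfl
  have hmxdvd : ∀ a ∈ S, a ∣ mx := by
    intro a ha
    rcases hchain a ha mx hmxS with h | h
    · exact h
    · have : mx = a := Nat.le_antisymm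
        (Nat.le_of_dvd (Nat.pos_of_ne_zero (h0 a ha)) h) (S.le_max' a ha)
      exact this ▸ dvd_rfl
  have hinj : Set.InjOn bigOmega S := by
    intro a ha b hb hab
    by_contra hne
    rcases hchain a ha b hb with h | h
    · exact absurd hab (bigOmega_lt_of_dvd h hne (h0 b hb)).ne
    · exact absurd hab.symm (bigOmega_lt_of_dvd h (Ne.symm hne) (h0 a ha)).ne
  have hsub : S.image bigOmega ⊆ Finset.Icc (bigOmega mn) (bigOmega mx) := by
    intro v hv
    obtain ⟨a, ha, rfl⟩ := Finset.mem_image.1 hv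
    exact Finset.mem_Icc.2 ⟨bigOmega_le_of_dvd (hmndvd a ha) (h0 a ha),
      bigOmega_le_of_dvd (hmxdvd a ha) (h0 mx hmxS)⟩
  have hcard : S.card ≤ bigOmega mx + 1 - bigOmega mn := by
    calc S.card = (S.image bigOmega).card := (Finset.card_image_of_injOn hinj).symm
      _ ≤ (Finset.Icc (bigOmega mn) (bigOmega mx)).card := Finset.card_le_card hsub
      _ = bigOmega mx + 1 - bigOmega mn := Nat.card_Icc _ _
  have hmxle : bigOmega mx ≤ bigOmega n := bigOmega_le_of_dvd (hdvd mx hmxS) hn0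
  by_cases h1 : mn = 1
  · have hmxn : mx ≠ n := by
      intro h
      exact hnot ⟨h1 ▸ hmnS, h ▸ hmxS⟩
    have : bigOmega mx < bigOmega n := bigOmega_lt_of_dvd (hdvd mx hmxS) hmxn hn0
    omega
  · have hmn2 : 2 ≤ mn := by
      have := h0 mn hmnS
      omega
    have := one_le_bigOmega hmn2
    omega

lemma bigOmega_listProd (l : List ℕ) (h : ∀ q ∈ l, q.Prime) :
    bigOmega l.prod = l.length := by
  induction l with
  | nil => simpa using bigOmega_one
  | cons q l ih =>
    have hq : q.Prime := h q List.mem_cons_self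
    have hl : ∀ x ∈ l, x.Prime := fun x hx => h x (List.mem_cons_of_mem q hx)
    have hl0 : l.prod ≠ 0 := by
      intro h0
      exact Nat.not_prime_zero (hl 0 (List.prod_eq_zero_iff.1 h0))
    rw [List.prod_cons, bigOmega_mul hq.pos.ne' hl0, ih hl, List.length_cons]
    have : bigOmega q = 1 := by
      have := bigOmega_pow (k := 1) hq
      rwa [pow_one] at this
    omega

lemma bigOmega_prod {ι : Type*} (s : Finset ι) (f : ι → ℕ) (hf : ∀ i ∈ s, f i ≠ 0) :
    bigOmega (∏ i ∈ s, f i) = ∑ i ∈ s, bigOmega (f i) := by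
  induction s using Finset.cons_induction with
  | empty => simpa using bigOmega_one
  | cons i s his ih =>
    rw [Finset.prod_cons, Finset.sum_cons,
      bigOmega_mul (hf i (Finset.mem_cons_self i s))
        (Finset.prod_ne_zero_iff.2 fun j hj => hf j (Finset.mem_cons_of_mem hj)),
      ih fun j hj => hf j (Finset.mem_cons_of_mem hj)]

section Chain
variable {n : ℕ} (hn0 : n ≠ 0)

/-- the `j`-th element of the divisor chain: product of the first `j+1` prime factors -/
def chainC (n j : ℕ) : ℕ := ((n.primeFactorsList).take (j + 1)).prod

include hn0 in
lemma chainC_facts :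
    (∀ j, chainC n j ∣ n) ∧ (∀ i j, i ≤ j → chainC n i ∣ chainC n j) ∧
      (∀ j, j < bigOmega n → bigOmega (chainC n j) = j + 1) ∧
      (0 < bigOmega n → chainC n (bigOmega n - 1) = n) := by
  set L := n.primeFactorsList with hL
  have hprime : ∀ q ∈ L, q.Prime := fun q hq => Nat.prime_of_mem_primeFactorsList hq
  have hprod : L.prod = n := Nat.prod_primeFactorsList hn0
  have hlen : L.length = bigOmega n := by rw [← bigOmega_listProd L hprime, hprod]
  have htake_prime : ∀ j, ∀ q ∈ L.take j, q.Prime :=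
    fun j q hq => hprime q (List.mem_of_mem_take hq)
  have hdvd : ∀ i j, i ≤ j → chainC n i ∣ chainC n j := by
    intro i j hij
    unfold chainC
    have : L.take (j+1) = L.take (i+1) ++ (L.drop (i+1)).take (j - i) := by
      rw [← List.take_add]
      congr 1
      omega
    rw [this, List.prod_append]
    exact dvd_mul_right _ _
  have hCn : ∀ j, chainC n j ∣ n := by
    intro j
    unfold chainC
    conv_rhs => rw [← hprod, ← List.take_append_drop (j+1) L]
    rw [List.prod_append]
    exact dvd_mul_right _ _
  refine ⟨hCn, hdvd, ?_, ?_⟩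
  · intro j hj
    unfold chainC
    rw [bigOmega_listProd _ (htake_prime (j+1)), List.length_take]
    omega
  · intro hpos
    unfold chainC
    have : bigOmega n - 1 + 1 = L.length := by omega
    rw [this, List.take_length, hprod]
end Chain

section ZModPart
variable {n : ℕ} [NeZero n]

lemma addOrderOf_div_coe {c : ℕ} (hc : c ∣ n) :
    addOrderOf ((↑(n / c) : ZMod n)) = c := by
  rw [ZMod.addOrderOf_coe _ (NeZero.ne n), Nat.gcd_eq_right (Nat.div_dvd_of_dvd hc),
    Nat.div_div_self hc (NeZero.ne n)]

lemma zmod_addOrderOf_dvd (y : ZMod n) : addOrderOf y ∣ n := by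
  have := addOrderOf_dvd_card (x := y)
  rwa [ZMod.card n] at this

lemma zmod_mem_zmultiples_div (y : ZMod n) :
    y ∈ AddSubgroup.zmultiples ((↑(n / addOrderOf y) : ZMod n)) := by
  set d := addOrderOf y with hd
  have hdn : d ∣ n := zmod_addOrderOf_dvd y
  have hd0 : d ≠ 0 := (addOrderOf_pos y).ne'
  have hy0 : ((d * y.val : ℕ) : ZMod n) = 0 := by
    push_cast
    rw [ZMod.natCast_zmod_val]
    have := addOrderOf_nsmul_eq_zero y
    rw [← hd, nsmul_eq_mul] at this
    exact this
  rw [ZMod.natCast_eq_zero_iff] at hy0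
  obtain ⟨t, ht⟩ := hy0
  have hnd : n / d * d = n := Nat.div_mul_cancel hdn
  have hval : y.val = n / d * t := by
    have h2 : d * (n / d * t) = n * t := by
      calc d * (n / d * t) = n / d * d * t := by ring
        _ = n * t := by rw [hnd]
    exact Nat.eq_of_mul_eq_mul_left (Nat.pos_of_ne_zero hd0) (ht.trans h2.symm)
  rw [AddSubgroup.mem_zmultiples_iff]
  refine ⟨(t : ℤ), ?_⟩
  have : ((n / d * t : ℕ) : ZMod n) = y := by rw [← hval, ZMod.natCast_zmod_val]
  rw [← this]
  rw [natCast_zsmul, nsmul_eq_mul, Nat.cast_mul, mul_comm]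

lemma zmod_mem_zmultiples_iff (x y : ZMod n) :
    x ∈ AddSubgroup.zmultiples y ↔ addOrderOf x ∣ addOrderOf y := by
  constructor
  · exact addOrderOf_dvd_of_mem_zmultiples
  · intro h
    set d := addOrderOf y with hd
    set e := addOrderOf x with he
    have hdn : d ∣ n := zmod_addOrderOf_dvd y
    have hd0 : d ≠ 0 := (addOrderOf_pos y).ne'
    have he0 : e ≠ 0 := (addOrderOf_pos x).ne'
    have hzy : AddSubgroup.zmultiples y = AddSubgroup.zmultiples ((↑(n / d) : ZMod n)) := by
      refine AddSubgroup.eq_of_le_of_card_ge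
        (AddSubgroup.zmultiples_le_of_mem (zmod_mem_zmultiples_div y)) ?_
      rw [Nat.card_zmultiples, Nat.card_zmultiples, addOrderOf_div_coe hdn]
    rw [hzy]
    have hx : x ∈ AddSubgroup.zmultiples ((↑(n / e) : ZMod n)) := zmod_mem_zmultiples_div x
    have hmem : ((↑(n / e) : ℕ) : ZMod n) ∈ AddSubgroup.zmultiples ((↑(n / d) : ZMod n)) := by
      have heq : n / e = n / d * (d / e) := by
        have h1 : n / d * (d / e) * e = n := by
          rw [mul_assoc, Nat.div_mul_cancel h, Nat.div_mul_cancel hdn]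
        conv_lhs => rw [← h1]
        rw [Nat.mul_div_cancel _ (Nat.pos_of_ne_zero he0)]
      rw [AddSubgroup.mem_zmultiples_iff]
      refine ⟨((d / e : ℕ) : ℤ), ?_⟩
      rw [heq, natCast_zsmul, nsmul_eq_mul, Nat.cast_mul, mul_comm]
    exact (AddSubgroup.zmultiples_le_of_mem hmem) hx

end ZModPart

section GraphPart
variable {n : ℕ} [NeZero n]

lemma mem_zpowers_iff_orderOf_dvd (x y : Multiplicative (ZMod n)) :
    x ∈ Subgroup.zpowers y ↔ orderOf x ∣ orderOf y := by
  constructor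
  · exact orderOf_dvd_of_mem_zpowers
  · intro h
    have h' : addOrderOf x.toAdd ∣ addOrderOf y.toAdd := h
    have := (zmod_mem_zmultiples_iff x.toAdd y.toAdd).2 h'
    rw [AddSubgroup.mem_zmultiples_iff] at this
    obtain ⟨k, hk⟩ := this
    rw [Subgroup.mem_zpowers_iff]
    exact ⟨k, by
      apply Multiplicative.toAdd.injective
      rw [← hk]
      rfl⟩

lemma orderOf_mul_zmod_dvd (x : Multiplicative (ZMod n)) : orderOf x ∣ n :=
  zmod_addOrderOf_dvd x.toAdd

lemma orderOf_ofAdd_div {c : ℕ} (hc : c ∣ n) :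
    orderOf (Multiplicative.ofAdd ((↑(n / c) : ZMod n))) = c :=
  addOrderOf_div_coe hc

lemma closedNbhd_powerGraph (x : Multiplicative (ZMod n)) :
    (powerGraph (Multiplicative (ZMod n))).closedNbhd x =
      {z | orderOf x ∣ orderOf z ∨ orderOf z ∣ orderOf x} := by
  ext z
  simp only [SimpleGraph.closedNbhd, Set.mem_insert_iff, SimpleGraph.mem_neighborSet,
    Set.mem_setOf_eq]
  have hAdj : (powerGraph (Multiplicative (ZMod n))).Adj x z ↔
      x ≠ z ∧ (x ∈ Subgroup.zpowers z ∨ z ∈ Subgroup.zpowers x) := Iff.rfl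
  rw [hAdj, mem_zpowers_iff_orderOf_dvd, mem_zpowers_iff_orderOf_dvd]
  constructor
  · rintro (rfl | ⟨-, h⟩)
    · exact Or.inl dvd_rfl
    · tauto
  · intro h
    rcases eq_or_ne z x with rfl | hne
    · exact Or.inl rfl
    · exact Or.inr ⟨hne.symm, by tauto⟩

lemma nbhd_eq_iff (x y : Multiplicative (ZMod n)) :
    (powerGraph (Multiplicative (ZMod n))).closedNbhd x =
      (powerGraph (Multiplicative (ZMod n))).closedNbhd y ↔
    ∀ c, c ∣ n → ((orderOf x ∣ c ∨ c ∣ orderOf x) ↔ (orderOf y ∣ c ∨ c ∣ orderOf y)) := by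
  rw [closedNbhd_powerGraph, closedNbhd_powerGraph]
  constructor
  · intro h c hc
    have := Set.ext_iff.1 h (Multiplicative.ofAdd ((↑(n / c) : ZMod n)))
    simpa only [Set.mem_setOf_eq, orderOf_ofAdd_div hc] using this
  · intro h
    ext z
    exact h (orderOf z) (orderOf_mul_zmod_dvd z)

end GraphPart


section Quot
variable {n : ℕ} [NeZero n]

variable (two : ∃ q s : ℕ, q.Prime ∧ s.Prime ∧ q ≠ s ∧ q ∣ n ∧ s ∣ n)

include two in
lemma nbhd_eq_char (x y : Multiplicative (ZMod n)) :
    (powerGraph (Multiplicative (ZMod n))).closedNbhd x =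
      (powerGraph (Multiplicative (ZMod n))).closedNbhd y ↔
    (orderOf x = orderOf y ∨
      ((orderOf x = 1 ∨ orderOf x = n) ∧ (orderOf y = 1 ∨ orderOf y = n))) := by
  rw [nbhd_eq_iff]
  constructor
  · intro h
    exact sep (NeZero.ne n) two (orderOf_mul_zmod_dvd x) (orderOf_mul_zmod_dvd y) h
  · rintro (heq | ⟨hx, hy⟩) c hc
    · rw [heq]
    · have hx' : orderOf x ∣ c ∨ c ∣ orderOf x := by
        rcases hx with h | h
        · exact Or.inl (h ▸ one_dvd c)
        · exact Or.inr (by rw [h]; exact hc)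
      have hy' : orderOf y ∣ c ∨ c ∣ orderOf y := by
        rcases hy with h | h
        · exact Or.inl (h ▸ one_dvd c)
        · exact Or.inr (by rw [h]; exact hc)
      exact iff_of_true hx' hy'

lemma mk_eq_mk {x y : Multiplicative (ZMod n)} :
    Quotient.mk (powerGraph (Multiplicative (ZMod n))).nbhdSetoid x =
      Quotient.mk (powerGraph (Multiplicative (ZMod n))).nbhdSetoid y ↔
    (powerGraph (Multiplicative (ZMod n))).closedNbhd x =
      (powerGraph (Multiplicative (ZMod n))).closedNbhd y :=
  ⟨Quotient.exact, fun h => Quot.sound h⟩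

lemma reduced_adj_out {a b : Quotient (powerGraph (Multiplicative (ZMod n))).nbhdSetoid}
    (h : (powerGraph (Multiplicative (ZMod n))).reduced.Adj a b) :
    (powerGraph (Multiplicative (ZMod n))).Adj a.out b.out := by
  obtain ⟨hne, x, y, hx, hy, hxy⟩ := h
  have h1 : (powerGraph (Multiplicative (ZMod n))).closedNbhd a.out =
      (powerGraph (Multiplicative (ZMod n))).closedNbhd x :=
    Quotient.exact ((a.out_eq).trans hx.symm)
  have h2 : (powerGraph (Multiplicative (ZMod n))).closedNbhd b.out =
      (powerGraph (Multiplicative (ZMod n))).closedNbhd y :=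
    Quotient.exact ((b.out_eq).trans hy.symm)
  have hy1 : y ∈ (powerGraph (Multiplicative (ZMod n))).closedNbhd a.out := by
    rw [h1]
    exact Set.mem_insert_iff.2 (Or.inr hxy)
  rcases Set.mem_insert_iff.1 hy1 with h3 | h3
  · exact absurd ((a.out_eq).symm.trans (by rw [← h3, hy])) hne
  · have h3' : (powerGraph (Multiplicative (ZMod n))).Adj a.out y :=
      (SimpleGraph.mem_neighborSet _ _ _).1 h3
    have ha1 : a.out ∈ (powerGraph (Multiplicative (ZMod n))).closedNbhd b.out := by
      rw [h2]
      refine Set.mem_insert_iff.2 (Or.inr ?_)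
      exact (SimpleGraph.mem_neighborSet _ _ _).2 h3'.symm
    rcases Set.mem_insert_iff.1 ha1 with h4 | h4
    · exact absurd (by rw [← a.out_eq, h4, b.out_eq]) hne
    · exact ((SimpleGraph.mem_neighborSet _ _ _).1 h4).symm

include two in
lemma orderOf_out_inj :
    Function.Injective
      (fun c : Quotient (powerGraph (Multiplicative (ZMod n))).nbhdSetoid =>
        orderOf c.out) := by
  intro c c' h
  rw [← c.out_eq, ← c'.out_eq]
  exact Quotient.sound ((nbhd_eq_char two _ _).2 (Or.inl h))

include two in
lemma one_n_class_eq {c c' : Quotient (powerGraph (Multiplicative (ZMod n))).nbhdSetoid}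
    (h : orderOf c.out = 1 ∨ orderOf c.out = n)
    (h' : orderOf c'.out = 1 ∨ orderOf c'.out = n) : c = c' := by
  rw [← c.out_eq, ← c'.out_eq]
  exact Quotient.sound ((nbhd_eq_char two _ _).2 (Or.inr ⟨h, h'⟩))

include two in
lemma clique_le (hn2 : 2 ≤ n) {k : ℕ}
    {t : Finset (Quotient (powerGraph (Multiplicative (ZMod n))).nbhdSetoid)}
    (h : (powerGraph (Multiplicative (ZMod n))).reduced.IsNClique k t) :
    k ≤ bigOmega n := by
  obtain ⟨hclq, hcard⟩ := h
  set f := fun c : Quotient (powerGraph (Multiplicative (ZMod n))).nbhdSetoid =>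
    orderOf c.out with hf
  have hcardS : (t.image f).card = k := by
    rw [Finset.card_image_of_injective _ (orderOf_out_inj two), hcard]
  rw [← hcardS]
  apply chain_card_le (NeZero.ne n) hn2
  · rintro a ha
    obtain ⟨c, -, rfl⟩ := Finset.mem_image.1 ha
    exact orderOf_mul_zmod_dvd _
  · rintro a ha b hb
    obtain ⟨c, hc, rfl⟩ := Finset.mem_image.1 ha
    obtain ⟨c', hc', rfl⟩ := Finset.mem_image.1 hb
    rcases eq_or_ne c c' with rfl | hne
    · exact Or.inl dvd_rfl
    · have hadj := hclq hc hc' hne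
      have := reduced_adj_out hadj
      rcases this.2 with h | h
      · exact Or.inl (orderOf_dvd_of_mem_zpowers h)
      · exact Or.inr (orderOf_dvd_of_mem_zpowers h)
  · rintro ⟨h1, hn'⟩
    obtain ⟨c, -, hc⟩ := Finset.mem_image.1 h1
    obtain ⟨c', -, hc'⟩ := Finset.mem_image.1 hn'
    have : c = c' := one_n_class_eq two (Or.inl hc) (Or.inr hc')
    rw [this, hc'] at hc
    omega

end Quot

section NewPart
variable {n : ℕ} [NeZero n]

variable (two : ∃ q s : ℕ, q.Prime ∧ s.Prime ∧ q ≠ s ∧ q ∣ n ∧ s ∣ n)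
include two in
lemma lower_clique (hn2 : 2 ≤ n) :
    ∃ t, (powerGraph (Multiplicative (ZMod n))).reduced.IsNClique (bigOmega n) t := by
  classical
  obtain ⟨hCn, hdvd, hOm, hlast⟩ := chainC_facts (n := n) (NeZero.ne n)
  set K := bigOmega n with hK
  set x : ℕ → Multiplicative (ZMod n) :=
    fun j => Multiplicative.ofAdd ((↑(n / chainC n j) : ZMod n)) with hx
  have hord : ∀ j, orderOf (x j) = chainC n j := fun j => orderOf_ofAdd_div (hCn j)
  have hmkinj : ∀ i < K, ∀ j < K,
      Quotient.mk (powerGraph (Multiplicative (ZMod n))).nbhdSetoid (x i) =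
        Quotient.mk (powerGraph (Multiplicative (ZMod n))).nbhdSetoid (x j) → i = j := by
    intro i hi j hj h
    rcases (nbhd_eq_char two (x i) (x j)).1 (mk_eq_mk.1 h) with h' | ⟨h1, h2⟩
    · have e1 := hOm i hi
      have e2 := hOm j hj
      rw [hord, hord] at h'
      rw [h'] at e1
      omega
    · rw [hord] at h1
      rw [hord] at h2
      rcases h1 with h1 | h1
      · have e1 := hOm i hi
        rw [h1, bigOmega_one] at e1
        omega
      · rcases h2 with h2 | h2
        · have e2 := hOm j hj
          rw [h2, bigOmega_one] at e2
          omega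
        · have e1 := hOm i hi
          have e2 := hOm j hj
          rw [h1] at e1
          rw [h2] at e2
          omega
  refine ⟨(Finset.range K).image
    (fun j => Quotient.mk (powerGraph (Multiplicative (ZMod n))).nbhdSetoid (x j)), ?_, ?_⟩
  · rintro a ha b hb hne
    rw [Finset.mem_coe, Finset.mem_image] at ha hb
    obtain ⟨i, hi, rfl⟩ := ha
    obtain ⟨j, hj, rfl⟩ := hb
    rw [Finset.mem_range] at hi hj
    have hij : i ≠ j := fun h => hne (by rw [h])
    have key : ∀ i' j', i' < K → j' < K → i' < j' →
        (powerGraph (Multiplicative (ZMod n))).reduced.Adj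
          (Quotient.mk (powerGraph (Multiplicative (ZMod n))).nbhdSetoid (x i'))
          (Quotient.mk (powerGraph (Multiplicative (ZMod n))).nbhdSetoid (x j')) := by
      intro i' j' hi' hj' hlt
      refine ⟨fun h => by have := hmkinj i' hi' j' hj' h; omega, x i', x j', rfl, rfl, ?_, ?_⟩
      · intro h
        have heq : chainC n i' = chainC n j' := by rw [← hord, ← hord, h]
        have e1 := hOm i' hi'
        have e2 := hOm j' hj'
        rw [heq] at e1
        omega
      · refine Or.inl ((mem_zpowers_iff_orderOf_dvd _ _).2 ?_)
        rw [hord, hord]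
        exact hdvd i' j' (le_of_lt hlt)
    rcases lt_or_gt_of_ne hij with h | h
    · exact key i j hi hj h
    · exact (key j i hj hi h).symm
  · rw [Finset.card_image_of_injOn, Finset.card_range]
    intro i hi j hj h
    exact hmkinj i (Finset.mem_range.1 hi) j (Finset.mem_range.1 hj) h

lemma prime_pow_nbhd_eq {p e : ℕ} (hp : p.Prime) (hnp : n = p ^ e)
    (x y : Multiplicative (ZMod n)) :
    (powerGraph (Multiplicative (ZMod n))).closedNbhd x =
      (powerGraph (Multiplicative (ZMod n))).closedNbhd y := by
  rw [nbhd_eq_iff]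
  intro c hc
  have hcomp : ∀ a : ℕ, a ∣ n → (a ∣ c ∨ c ∣ a) := by
    intro a ha
    rw [hnp] at ha hc
    obtain ⟨i, hi, rfl⟩ := (Nat.dvd_prime_pow hp).1 ha
    obtain ⟨j, hj, rfl⟩ := (Nat.dvd_prime_pow hp).1 hc
    rcases le_total i j with h | h
    · exact Or.inl (pow_dvd_pow p h)
    · exact Or.inr (pow_dvd_pow p h)
  exact iff_of_true (hcomp _ (orderOf_mul_zmod_dvd x)) (hcomp _ (orderOf_mul_zmod_dvd y))
end NewPart

lemma cliqueNum_eq_of {V : Type*} (G : SimpleGraph V) (K : ℕ)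
    (hmem : ∃ t, G.IsNClique K t) (hub : ∀ k (t : Finset V), G.IsNClique k t → k ≤ K) :
    G.cliqueNum = K := by
  apply le_antisymm
  · exact csSup_le ⟨K, hmem⟩ (fun k hk => by obtain ⟨t, ht⟩ := hk; exact hub k t ht)
  · exact le_csSup ⟨K, fun k hk => by obtain ⟨t, ht⟩ := hk; exact hub k t ht⟩ hmem

theorem stmt_2 (m : ℕ) (hm : 1 ≤ m) (p r : Fin m → ℕ) (hp : ∀ i, (p i).Prime)
    (hinj : Function.Injective p) (hr : ∀ i, 1 ≤ r i)
    (n : ℕ) (hn : n = ∏ i, p i ^ r i) :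
    (powerGraph (Multiplicative (ZMod n))).reduced.cliqueNum =
      if m = 1 then 1 else ∑ i, r i := by
  have hfac0 : ∀ i ∈ Finset.univ, p i ^ r i ≠ 0 := fun i _ => pow_ne_zero _ (hp i).pos.ne'
  have hn0 : n ≠ 0 := by
    rw [hn]
    exact Finset.prod_ne_zero_iff.2 hfac0
  haveI : NeZero n := ⟨hn0⟩
  have hdvdn : ∀ i : Fin m, p i ∣ n := by
    intro i
    rw [hn]
    exact dvd_trans (dvd_pow_self (p i) (by have := hr i; omega))
      (Finset.dvd_prod_of_mem _ (Finset.mem_univ i))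
  have hn2 : 2 ≤ n := by
    have h0 : (0 : ℕ) < m := hm
    have := Nat.le_of_dvd (Nat.pos_of_ne_zero hn0) (hdvdn ⟨0, h0⟩)
    have := (hp ⟨0, h0⟩).two_le
    omega
  have hOm : bigOmega n = ∑ i, r i := by
    rw [hn, bigOmega_prod _ _ hfac0]
    exact Finset.sum_congr rfl fun i _ => bigOmega_pow (hp i)
  by_cases hm1 : m = 1
  · rw [if_pos hm1]
    subst hm1
    have hnp : n = p 0 ^ r 0 := by
      rw [hn, Fin.prod_univ_one]
    apply cliqueNum_eq_of
    · refine ⟨{Quotient.mk (powerGraph (Multiplicative (ZMod n))).nbhdSetoid 1}, ?_⟩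
      exact SimpleGraph.isNClique_singleton.2 rfl
    · intro k t ht
      rw [← ht.2]
      apply Finset.card_le_one.2
      intro a ha b hb
      induction a using Quotient.ind
      induction b using Quotient.ind
      exact Quot.sound (prime_pow_nbhd_eq (hp 0) hnp _ _)
  · rw [if_neg hm1]
    have hm2 : 2 ≤ m := by omega
    have two : ∃ q s : ℕ, q.Prime ∧ s.Prime ∧ q ≠ s ∧ q ∣ n ∧ s ∣ n := by
      refine ⟨p ⟨0, by omega⟩, p ⟨1, by omega⟩, hp _, hp _, ?_, hdvdn _, hdvdn _⟩
      intro h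
      have := hinj h
      simp [Fin.ext_iff] at this
    rw [← hOm]
    apply cliqueNum_eq_of
    · exact lower_clique two hn2
    · intro k t ht
      exact clique_le two hn2 ht
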